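/- There exist an instance of the threshold reserve model (with two patients, two categories, and one vaccine reserved per category) such that no matching simultaneously complies with eligibility requirements, is maximal in beneficiary assignment, and is maximal in resource allocation. Consequently, no mechanism satisfying universal domain can be both maximal in beneficiary assignment and maximal in resource allocation. -/

import Mathlib

open scoped Classical

variable {ι κ : Type*} [Fintype ι] [Fintype κ]

/-- Number of patients matched to category `c` under matching `μ`. -/
noncomputable def matchCount (μ : ι → Option κ) (c : κ) : ℕ :=
  (Finset.univ.filter fun i => μ i = some c).card

/-- Number of matched patients under `μ`. -/
noncomputable def matchedCard (μ : ι → Option κ) : ℕ :=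
  (Finset.univ.filter fun i => μ i ≠ none).card

/-- Number of patients matched to a category of which they are a beneficiary. -/
noncomputable def benefCard (B : κ → Finset ι) (μ : ι → Option κ) : ℕ :=
  (Finset.univ.filter fun i => ∃ c, μ i = some c ∧ i ∈ B c).card

/-- `μ` respects the capacity (reserve) of every category. -/
def Caps (r : κ → ℕ) (μ : ι → Option κ) : Prop :=
  ∀ c, matchCount μ c ≤ r c

/-- `μ` complies with eligibility requirements. -/
def Complies (E : κ → Finset ι) (μ : ι → Option κ) : Prop :=
  ∀ i c, μ i = some c → i ∈ E c

/-- `μ` is a feasible eligibility-complying matching. -/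
def Valid (r : κ → ℕ) (E : κ → Finset ι) (μ : ι → Option κ) : Prop :=
  Caps r μ ∧ Complies E μ

/-- `μ` is maximal in resource allocation. -/
def MaxRes (r : κ → ℕ) (E : κ → Finset ι) (μ : ι → Option κ) : Prop :=
  Valid r E μ ∧ ∀ μ', Valid r E μ' → matchedCard μ' ≤ matchedCard μ

/-- `μ` is max-in-max: maximal in resource allocation and maximizing beneficiary
assignments among such matchings. -/
def MaxInMax (r : κ → ℕ) (E B : κ → Finset ι) (μ : ι → Option κ) : Prop :=
  MaxRes r E μ ∧ ∀ μ', MaxRes r E μ' → benefCard B μ' ≤ benefCard B μ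
/-- `μ` is maximal in beneficiary assignment. -/
def MaxBenef (r : κ → ℕ) (E B : κ → Finset ι) (μ : ι → Option κ) : Prop :=
  Valid r E μ ∧ ∀ μ', Valid r E μ' → benefCard B μ' ≤ benefCard B μ

/-- Impossibility: there is an instance of the threshold reserve model with two patients,
two categories and one vaccine reserved per category in which no eligibility-complying
matching is both maximal in beneficiary assignment and maximal in resource allocation;
consequently, no mechanism (defined on all such instances, i.e. satisfying universal
domain) can always output a matching that is both. -/

lemma matchedCard_fin2 (μ : Fin 2 → Option (Fin 2)) :
    matchedCard μ = (if μ 0 ≠ none then 1 else 0) + (if μ 1 ≠ none then 1 else 0) := by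
  rw [matchedCard, Finset.card_filter, Fin.sum_univ_two]

lemma matchCount_fin2 (μ : Fin 2 → Option (Fin 2)) (c : Fin 2) :
    matchCount μ c = (if μ 0 = some c then 1 else 0) + (if μ 1 = some c then 1 else 0) := by
  rw [matchCount, Finset.card_filter, Fin.sum_univ_two]; split_ifs <;> rfl

lemma benefCard_fin2 (B : Fin 2 → Finset (Fin 2)) (μ : Fin 2 → Option (Fin 2)) :
    benefCard B μ = (if (∃ c, μ 0 = some c ∧ 0 ∈ B c) then 1 else 0)
      + (if (∃ c, μ 1 = some c ∧ 1 ∈ B c) then 1 else 0) := by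
  rw [benefCard, Finset.card_filter, Fin.sum_univ_two]; split_ifs <;> rfl

lemma impossibility_core :
    ∃ E B : Fin 2 → Finset (Fin 2),
      (∀ c, B c ⊆ E c) ∧
      ¬ ∃ μ : Fin 2 → Option (Fin 2),
          Valid (fun _ => 1) E μ ∧
          MaxBenef (fun _ => 1) E B μ ∧ MaxRes (fun _ => 1) E μ := by
  refine ⟨![{0, 1}, {0}], ![{0}, ∅], ?_, ?_⟩
  · intro c
    fin_cases c <;> simp [Finset.subset_iff]
  rintro ⟨μ, _, hB, hR⟩
  -- the fully-matching matching
  set μr : Fin 2 → Option (Fin 2) := ![some 1, some 0] with hμr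
  have hμrV : Valid (fun _ => 1) ![{0, 1}, {0}] μr := by
    constructor
    · intro c
      fin_cases c <;> simp [matchCount_fin2, hμr]
    · intro i c h
      fin_cases i <;> fin_cases c <;> simp [hμr] at h ⊢
  -- the beneficiary-maximizing matching
  set μb : Fin 2 → Option (Fin 2) := ![some 0, none] with hμb
  have hμbV : Valid (fun _ => 1) ![{0, 1}, {0}] μb := by
    constructor
    · intro c
      fin_cases c <;> simp [matchCount_fin2, hμb]
    · intro i c h
      fin_cases i <;> fin_cases c <;> simp [hμb] at h ⊢
  have h2 : 2 ≤ matchedCard μ := by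
    have := hR.2 μr hμrV
    have hr2 : matchedCard μr = 2 := by simp [matchedCard_fin2, hμr]
    omega
  have h1 : 1 ≤ benefCard ![{0}, ∅] μ := by
    have := hB.2 μb hμbV
    have hb1 : benefCard ![{0}, ∅] μb = 1 := by
      rw [benefCard_fin2]
      simp [hμb]
    omega
  -- both patients matched
  rw [matchedCard_fin2] at h2
  have h0ne : μ 0 ≠ none := by
    by_contra h; simp [h] at h2; split_ifs at h2 <;> omega
  have h1ne : μ 1 ≠ none := by
    by_contra h; simp [h] at h2; split_ifs at h2 <;> omega
  obtain ⟨c0, hc0⟩ := Option.ne_none_iff_exists'.mp h0ne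
  obtain ⟨c1, hc1⟩ := Option.ne_none_iff_exists'.mp h1ne
  -- patient 1 must go to category 0
  have hc1v : c1 = 0 := by
    have := hR.1.2 1 c1 hc1
    fin_cases c1
    · rfl
    · simp at this
  -- capacity of category 0 forces patient 0 to category 1
  have hc0v : c0 = 1 := by
    have hcap := hR.1.1 0
    rw [matchCount_fin2, hc0, hc1, hc1v] at hcap
    fin_cases c0
    · simp at hcap
    · rfl
  -- but then nobody is a beneficiary
  rw [benefCard_fin2, hc0, hc1, hc0v, hc1v] at h1
  norm_num at h1

theorem impossibility :
    (∃ E B : Fin 2 → Finset (Fin 2),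
      (∀ c, B c ⊆ E c) ∧
      ¬ ∃ μ : Fin 2 → Option (Fin 2),
          Valid (fun _ => 1) E μ ∧
          MaxBenef (fun _ => 1) E B μ ∧ MaxRes (fun _ => 1) E μ) ∧
    (∀ M : (Fin 2 → Finset (Fin 2)) → (Fin 2 → Finset (Fin 2)) → (Fin 2 → Option (Fin 2)),
      ¬ ∀ E B : Fin 2 → Finset (Fin 2), (∀ c, B c ⊆ E c) →
          Valid (fun _ => 1) E (M E B) ∧
          MaxBenef (fun _ => 1) E B (M E B) ∧ MaxRes (fun _ => 1) E (M E B)) := by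
  obtain ⟨E, B, hBE, hno⟩ := impossibility_core
  refine ⟨⟨E, B, hBE, hno⟩, ?_⟩
  intro M hM
  exact hno ⟨M E B, hM E B hBE⟩
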